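/- Let V = V₀ ⊕ V₁ be a nonzero finite-dimensional complex super vector space with grading involution ε, and let S be a set of homogeneous endomorphisms of V acting graded-irreducibly. Then the set of odd endomorphisms of V that supercommute with S is a complex subspace of End(V) of dimension at most one, and every nonzero element of this subspace is invertible. -/
import Mathlib


/-- Graded Schur's lemma, odd part: if a set `S` of homogeneous endomorphisms of a
nonzero finite-dimensional complex super vector space `V` (with grading involution `ε`)
acts graded-irreducibly, then the odd endomorphisms of `V` supercommuting with `S`
form a complex subspace of `End(V)` of dimension at most one, all of whose nonzero
elements are invertible. -/
theorem graded_schur_odd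
    (V : Type*) [AddCommGroup V] [Module ℂ V] [FiniteDimensional ℂ V] [Nontrivial V]
    (ε : Module.End ℂ V) (hε : ε * ε = 1)
    (S : Set (Module.End ℂ V))
    (hhom : ∀ Φ ∈ S, Φ * ε = ε * Φ ∨ Φ * ε = -(ε * Φ))
    (hirr : ∀ W : Submodule ℂ V, (∀ x ∈ W, ε x ∈ W) →
      (∀ Φ ∈ S, ∀ x ∈ W, Φ x ∈ W) → W = ⊥ ∨ W = ⊤) :
    ∃ W : Submodule ℂ (Module.End ℂ V),
      (∀ T : Module.End ℂ V, T ∈ W ↔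
        (T * ε = -(ε * T) ∧
          ∀ Φ ∈ S, (Φ * ε = ε * Φ → T * Φ = Φ * T) ∧
                   (Φ * ε = -(ε * Φ) → T * Φ = -(Φ * T)))) ∧
      Module.finrank ℂ W ≤ 1 ∧
      ∀ T ∈ W, T ≠ 0 → Function.Bijective T := by
  classical
  set P : Module.End ℂ V → Prop := fun T =>
    (T * ε = -(ε * T) ∧
      ∀ Φ ∈ S, (Φ * ε = ε * Φ → T * Φ = Φ * T) ∧
               (Φ * ε = -(ε * Φ) → T * Φ = -(Φ * T))) with hP
  have Wdef : ∃ W : Submodule ℂ (Module.End ℂ V), ∀ T, T ∈ W ↔ P T := by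
    refine ⟨{ carrier := {T | P T}, add_mem' := ?_, zero_mem' := ?_,
              smul_mem' := ?_ }, fun T => Iff.rfl⟩
    · rintro a b ⟨ha1, ha2⟩ ⟨hb1, hb2⟩
      refine ⟨by rw [add_mul, mul_add, ha1, hb1, neg_add], fun Φ hΦ => ?_⟩
      obtain ⟨ha2e, ha2o⟩ := ha2 Φ hΦ
      obtain ⟨hb2e, hb2o⟩ := hb2 Φ hΦ
      constructor
      · intro h; rw [add_mul, mul_add, ha2e h, hb2e h]
      · intro h; rw [add_mul, mul_add, ha2o h, hb2o h, neg_add]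
    · exact ⟨by simp, fun Φ hΦ => ⟨fun _ => by simp, fun _ => by simp⟩⟩
    · rintro c a ⟨ha1, ha2⟩
      refine ⟨by rw [smul_mul_assoc, mul_smul_comm, ha1, smul_neg], fun Φ hΦ => ?_⟩
      obtain ⟨ha2e, ha2o⟩ := ha2 Φ hΦ
      constructor
      · intro h; rw [smul_mul_assoc, mul_smul_comm, ha2e h]
      · intro h; rw [smul_mul_assoc, mul_smul_comm, ha2o h, smul_neg]
  obtain ⟨W, hW⟩ := Wdef
  have hbij : ∀ T, P T → T ≠ 0 → Function.Bijective T := by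
    intro T hT hT0
    obtain ⟨hTε, hTS⟩ := hT
    have hker : LinearMap.ker T = ⊥ ∨ LinearMap.ker T = ⊤ := by
      apply hirr
      · intro x hx
        have : T (ε x) = 0 := by
          have := congrArg (fun f : Module.End ℂ V => f x) hTε
          simp only [Module.End.mul_apply, LinearMap.neg_apply] at this
          rw [this, LinearMap.mem_ker.mp hx, map_zero, neg_zero]
        exact LinearMap.mem_ker.mpr this
      · intro Φ hΦ x hx
        have hx0 : T x = 0 := LinearMap.mem_ker.mp hx
        obtain ⟨he, ho⟩ := hTS Φ hΦ
        rcases hhom Φ hΦ with h | h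
        · have := congrArg (fun f : Module.End ℂ V => f x) (he h)
          simp only [Module.End.mul_apply] at this
          exact LinearMap.mem_ker.mpr (by rw [this, hx0, map_zero])
        · have := congrArg (fun f : Module.End ℂ V => f x) (ho h)
          simp only [Module.End.mul_apply, LinearMap.neg_apply] at this
          exact LinearMap.mem_ker.mpr (by rw [this, hx0, map_zero, neg_zero])
    rcases hker with h | h
    · have hinj : Function.Injective T := LinearMap.ker_eq_bot.mp h
      exact ⟨hinj, (LinearMap.injective_iff_surjective).mp hinj⟩
    · exact absurd (LinearMap.ker_eq_top.mp h) hT0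
  refine ⟨W, hW, ?_, fun T hT => hbij T ((hW T).mp hT)⟩
  by_cases hWbot : W = ⊥
  · subst hWbot
    simp [finrank_bot]
  · obtain ⟨T₂, hT₂W, hT₂0⟩ := Submodule.exists_mem_ne_zero_of_ne_bot hWbot
    have hT₂ : P T₂ := (hW T₂).mp hT₂W
    have hT₂bij := hbij T₂ hT₂ hT₂0
    have hunit : IsUnit T₂ := (Module.End.isUnit_iff T₂).mpr hT₂bij
    obtain ⟨u, hu⟩ := hunit
    set B : Module.End ℂ V := ↑u⁻¹ with hB
    have huB : T₂ * B = 1 := by rw [← hu, hB]; exact u.mul_inv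
    have hBu : B * T₂ = 1 := by rw [← hu, hB]; exact u.inv_mul
    obtain ⟨hT₂ε, hT₂S⟩ := hT₂
    have hBε : B * ε = -(ε * B) := by
      calc B * ε = B * ε * (T₂ * B) := by rw [huB, mul_one]
        _ = B * (ε * T₂) * B := by noncomm_ring
        _ = B * (-(T₂ * ε)) * B := by
            rw [show ε * T₂ = -(T₂ * ε) from by rw [hT₂ε, neg_neg]]
        _ = -((B * T₂) * (ε * B)) := by noncomm_ring
        _ = -(ε * B) := by rw [hBu, one_mul]
    have hBS : ∀ Φ ∈ S, (Φ * ε = ε * Φ → B * Φ = Φ * B) ∧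
        (Φ * ε = -(ε * Φ) → B * Φ = -(Φ * B)) := by
      intro Φ hΦ
      obtain ⟨he, ho⟩ := hT₂S Φ hΦ
      constructor
      · intro h
        have h2 := he h
        calc B * Φ = B * Φ * (T₂ * B) := by rw [huB, mul_one]
          _ = B * (Φ * T₂) * B := by noncomm_ring
          _ = B * (T₂ * Φ) * B := by rw [← h2]
          _ = (B * T₂) * (Φ * B) := by noncomm_ring
          _ = Φ * B := by rw [hBu, one_mul]
      · intro h
        have h2 := ho h
        calc B * Φ = B * Φ * (T₂ * B) := by rw [huB, mul_one]
          _ = B * (Φ * T₂) * B := by noncomm_ring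
          _ = B * (-(T₂ * Φ)) * B := by
              rw [show Φ * T₂ = -(T₂ * Φ) from by rw [h2, neg_neg]]
          _ = -((B * T₂) * (Φ * B)) := by noncomm_ring
          _ = -(Φ * B) := by rw [hBu, one_mul]
    have hspan : W ≤ Submodule.span ℂ {T₂} := by
      intro T hTW
      obtain ⟨hTε, hTS⟩ := (hW T).mp hTW
      set A : Module.End ℂ V := T * B with hA
      have hAε : A * ε = ε * A := by
        calc A * ε = T * (B * ε) := by rw [hA]; noncomm_ring
          _ = T * (-(ε * B)) := by rw [hBε]
          _ = -(T * ε) * B := by noncomm_ring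
          _ = -(-(ε * T)) * B := by rw [hTε]
          _ = ε * A := by rw [hA]; noncomm_ring
      have hAS : ∀ Φ ∈ S, A * Φ = Φ * A := by
        intro Φ hΦ
        obtain ⟨hBe, hBo⟩ := hBS Φ hΦ
        obtain ⟨hTe, hTo⟩ := hTS Φ hΦ
        rcases hhom Φ hΦ with hh | hh
        · calc A * Φ = T * (B * Φ) := by rw [hA]; noncomm_ring
            _ = (T * Φ) * B := by rw [hBe hh]; noncomm_ring
            _ = (Φ * T) * B := by rw [hTe hh]
            _ = Φ * A := by rw [hA]; noncomm_ring
        · calc A * Φ = T * (B * Φ) := by rw [hA]; noncomm_ring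
            _ = -(T * Φ) * B := by rw [hBo hh]; noncomm_ring
            _ = -(-(Φ * T)) * B := by rw [hTo hh]
            _ = Φ * A := by rw [hA]; noncomm_ring
      obtain ⟨c, hc⟩ := Module.End.exists_eigenvalue A
      have hEig : Module.End.eigenspace A c = ⊤ := by
        have inv1 : ∀ x ∈ Module.End.eigenspace A c, ε x ∈ Module.End.eigenspace A c := by
          intro x hx
          rw [Module.End.mem_eigenspace_iff] at hx ⊢
          have := congrArg (fun f : Module.End ℂ V => f x) hAε
          simp only [Module.End.mul_apply] at this
          rw [this, hx, map_smul]
        have inv2 : ∀ Φ ∈ S, ∀ x ∈ Module.End.eigenspace A c, Φ x ∈ Module.End.eigenspace A c := by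
          intro Φ hΦ x hx
          rw [Module.End.mem_eigenspace_iff] at hx ⊢
          have := congrArg (fun f : Module.End ℂ V => f x) (hAS Φ hΦ)
          simp only [Module.End.mul_apply] at this
          rw [this, hx, map_smul]
        rcases hirr _ inv1 inv2 with h | h
        · exact absurd h hc
        · exact h
      have hAc : A = c • 1 := by
        ext x
        have hx : x ∈ Module.End.eigenspace A c := hEig ▸ Submodule.mem_top
        rw [Module.End.mem_eigenspace_iff] at hx
        simpa using hx
      have : T = c • T₂ := by
        calc T = T * (B * T₂) := by rw [hBu, mul_one]
          _ = A * T₂ := by rw [hA]; noncomm_ring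
          _ = (c • 1) * T₂ := by rw [hAc]
          _ = c • T₂ := by rw [smul_mul_assoc, one_mul]
      rw [this]
      exact Submodule.smul_mem _ c (Submodule.mem_span_singleton_self T₂)
    calc Module.finrank ℂ W ≤ Module.finrank ℂ (Submodule.span ℂ {T₂}) :=
          Submodule.finrank_mono hspan
      _ = 1 := finrank_span_singleton hT₂0
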